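/- Let Θ be a measurable space, G : Θ → ℝⁿ measurable, R ⊆ ℝⁿ a measurable set, and F : ℝⁿ → Θ a measurable map satisfying G(F(y)) = y for every y ∈ R. Let ρ_y be a probability measure on ℝⁿ with ρ_y(R) > 0, and let φ : ℝ → ℝ be convex with φ(1) = 0. Define ρ_x* := F_#(ρ_y(·|R)). Then (i) G_# ρ_x* = ρ_y(·|R), and (ii) for every probability measure ρ on Θ with G_# ρ ≪ ρ_y and G_# ρ supported in R (and with φ ∘ d(G_#ρ)/dρ_y Q-integrable), D_φ(G_# ρ_x* ‖ ρ_y) ≤ D_φ(G_# ρ ‖ ρ_y). That is, the pushforward of any minimizer of ρ ↦ D_φ(G_#ρ‖ρ_y) is the conditional distribution of ρ_y on R. -/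

import Mathlib

open MeasureTheory ProbabilityTheory Real

/-- Let `G : Θ → ℝⁿ` be measurable, `R ⊆ ℝⁿ` measurable, and
`F : ℝⁿ → Θ` a measurable map with `G (F y) = y` for every `y ∈ R`. Let `ρy` be a
probability measure on `ℝⁿ` with `ρy R > 0`, and `φ` convex with `φ 1 = 0`.
With `ρx* := F_#(ρy(·|R))`: (i) `G_# ρx* = ρy(·|R)`, and (ii) for every probability
measure `ρ` on `Θ` with `G_#ρ ≪ ρy` supported in `R` (with the divergence integrand
integrable), `D_φ(G_#ρx*‖ρy) ≤ D_φ(G_#ρ‖ρy)`. -/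
theorem stmt_1 {Θ : Type*} [MeasurableSpace Θ] {n : ℕ}
    (G : Θ → EuclideanSpace ℝ (Fin n)) (hG : Measurable G)
    (R : Set (EuclideanSpace ℝ (Fin n))) (hR : MeasurableSet R)
    (F : EuclideanSpace ℝ (Fin n) → Θ) (hF : Measurable F)
    (hGF : ∀ y ∈ R, G (F y) = y)
    (ρy : Measure (EuclideanSpace ℝ (Fin n))) [IsProbabilityMeasure ρy]
    (hρyR : 0 < ρy R)
    (φ : ℝ → ℝ) (hφconv : ConvexOn ℝ Set.univ φ) (hφ1 : φ 1 = 0) :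
    ((ρy[|R]).map F).map G = ρy[|R] ∧
    ∀ ρ : Measure Θ, IsProbabilityMeasure ρ →
      ρ.map G ≪ ρy → (ρ.map G) Rᶜ = 0 →
      Integrable (fun y => φ (((ρ.map G).rnDeriv ρy y).toReal)) ρy →
      ∫ y, φ (((((ρy[|R]).map F).map G).rnDeriv ρy y).toReal) ∂ρy ≤
        ∫ y, φ (((ρ.map G).rnDeriv ρy y).toReal) ∂ρy := by
  have hρR0 : ρy R ≠ 0 := hρyR.ne'
  have hρRtop : ρy R ≠ ⊤ := measure_ne_top _ _
  have hc_top : (ρy R)⁻¹ ≠ ⊤ := by simp [hρR0]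
  set ct : ℝ := (ρy R).toReal⁻¹ with hct
  have hrR0 : (ρy R).toReal ≠ 0 := ENNReal.toReal_ne_zero.2 ⟨hρR0, hρRtop⟩
  have hcond_def : ρy[|R] = (ρy R)⁻¹ • ρy.restrict R := rfl
  haveI : IsProbabilityMeasure (ρy[|R]) := cond_isProbabilityMeasure hρR0
  -- part (i)
  have hcompl : (ρy[|R]) Rᶜ = 0 := by
    rw [cond_apply hR]; simp
  have haeR : ∀ᵐ y ∂(ρy[|R]), y ∈ R := by
    rw [ae_iff]; exact hcompl
  have hi : ((ρy[|R]).map F).map G = ρy[|R] := by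
    rw [Measure.map_map hG hF]
    have hae : (G ∘ F) =ᵐ[ρy[|R]] id := by
      filter_upwards [haeR] with y hy using hGF y hy
    rw [Measure.map_congr hae, Measure.map_id]
  refine ⟨hi, fun ρ hρ hQρ hQRc hint => ?_⟩
  rw [hi]
  set Q := ρ.map G with hQ
  haveI : IsProbabilityMeasure Q := Measure.isProbabilityMeasure_map hG.aemeasurable
  set f : EuclideanSpace ℝ (Fin n) → ℝ := fun y => (Q.rnDeriv ρy y).toReal with hf
  -- rnDeriv of the conditional measure
  have hrnd : (ρy[|R]).rnDeriv ρy =ᵐ[ρy] fun y => (ρy R)⁻¹ * R.indicator 1 y := by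
    rw [hcond_def]
    filter_upwards [Measure.rnDeriv_smul_left_of_ne_top' (ρy.restrict R) ρy hc_top,
      Measure.rnDeriv_restrict_self ρy hR] with y h1 h2
    simp [h1, h2]
  -- LHS integrand a.e. equals an explicit function
  have hLHS : ∫ y, φ (((ρy[|R]).rnDeriv ρy y).toReal) ∂ρy
      = ∫ y, (R.indicator (fun _ => φ ct - φ 0) y + φ 0) ∂ρy := by
    refine integral_congr_ae ?_
    filter_upwards [hrnd] with y hy
    rw [hy]
    by_cases hyR : y ∈ R
    · simp [Set.indicator_of_mem hyR, ENNReal.toReal_inv, hct]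
    · simp [Set.indicator_of_notMem hyR]
  have hLHSval : ∫ y, φ (((ρy[|R]).rnDeriv ρy y).toReal) ∂ρy
      = (ρy R).toReal * φ ct + (ρy Rᶜ).toReal * φ 0 := by
    rw [hLHS, integral_add ((integrable_const _).indicator hR) (integrable_const _),
      integral_indicator_const _ hR, integral_const]
    have hcompl' : (ρy Rᶜ).toReal = 1 - (ρy R).toReal := by
      rw [prob_compl_eq_one_sub hR, ENNReal.toReal_sub_of_le prob_le_one (by simp)]
      simp
    simp only [measureReal_def, measure_univ, ENNReal.toReal_one, smul_eq_mul, one_mul, hcompl']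
    ring
  rw [hLHSval]
  -- properties of f
  have hf_meas : Measurable f := (Measure.measurable_rnDeriv _ _).ennreal_toReal
  have hf_int : Integrable f ρy := Measure.integrable_toReal_rnDeriv
  have hfR : ∫ y in R, f y ∂ρy = 1 := by
    rw [hf, Measure.setIntegral_toReal_rnDeriv hQρ R]
    have : Q R = 1 := by
      have h := measure_add_measure_compl (μ := Q) hR
      rw [hQRc, add_zero] at h
      rw [h, measure_univ]
    simp [measureReal_def, this]
  -- f vanishes a.e. on Rᶜ
  have hf0 : ∀ᵐ y ∂(ρy.restrict Rᶜ), f y = 0 := by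
    have h0 : ∫⁻ y in Rᶜ, Q.rnDeriv ρy y ∂ρy = 0 := by
      rw [Measure.setLIntegral_rnDeriv hQρ]; exact hQRc
    have := (lintegral_eq_zero_iff (Measure.measurable_rnDeriv Q ρy)).1 h0
    filter_upwards [this] with y hy
    simp [hf, hy]
  -- Jensen's inequality on the conditional measure
  have hf_int_cond : Integrable f (ρy[|R]) := by
    rw [hcond_def]
    exact (hf_int.restrict).smul_measure hc_top
  have hφf_int_cond : Integrable (fun y => φ (f y)) (ρy[|R]) := by
    rw [hcond_def]
    exact (hint.restrict).smul_measure hc_top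
  have hjensen : φ (∫ y, f y ∂(ρy[|R])) ≤ ∫ y, φ (f y) ∂(ρy[|R]) :=
    hφconv.map_integral_le (hφconv.continuousOn isOpen_univ) isClosed_univ
      (Filter.Eventually.of_forall fun _ => Set.mem_univ _) hf_int_cond hφf_int_cond
  have hmean : ∫ y, f y ∂(ρy[|R]) = ct := by
    rw [hcond_def, integral_smul_measure, hfR]
    simp [ENNReal.toReal_inv, hct]
  have hcondint : ∫ y, φ (f y) ∂(ρy[|R]) = ct * ∫ y in R, φ (f y) ∂ρy := by
    rw [hcond_def, integral_smul_measure, ENNReal.toReal_inv]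
    rfl
  rw [hmean, hcondint] at hjensen
  -- lower bound on the integral over R
  have hR_bound : (ρy R).toReal * φ ct ≤ ∫ y in R, φ (f y) ∂ρy := by
    have h := mul_le_mul_of_nonneg_left hjensen (ENNReal.toReal_nonneg (a := ρy R))
    calc (ρy R).toReal * φ ct ≤ (ρy R).toReal * (ct * ∫ y in R, φ (f y) ∂ρy) := h
    _ = ((ρy R).toReal * ct) * ∫ y in R, φ (f y) ∂ρy := by ring
    _ = ∫ y in R, φ (f y) ∂ρy := by
        rw [hct, mul_inv_cancel₀ hrR0, one_mul]
  -- the integral over Rᶜ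
  have hRc_val : ∫ y in Rᶜ, φ (f y) ∂ρy = (ρy Rᶜ).toReal * φ 0 := by
    rw [integral_congr_ae (g := fun _ => φ 0) ?_, setIntegral_const, smul_eq_mul, measureReal_def]
    filter_upwards [hf0] with y hy
    rw [hy]
  calc (ρy R).toReal * φ ct + (ρy Rᶜ).toReal * φ 0
      ≤ (∫ y in R, φ (f y) ∂ρy) + ∫ y in Rᶜ, φ (f y) ∂ρy := by
        rw [hRc_val]; exact add_le_add hR_bound le_rfl
    _ = ∫ y, φ (f y) ∂ρy := integral_add_compl hR hint
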